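/- Let R be a commutative ring with identity, M an R-module, S a multiplicatively closed subset of R, and N a finitely generated submodule of M that is both a prime submodule and a strongly 2-irreducible submodule of M, with (N :_R M) ∩ S = ∅. If the localization S⁻¹N is a proper submodule of S⁻¹M, then S⁻¹N is a strongly 2-irreducible submodule of the S⁻¹R-module S⁻¹M. -/
import Mathlib


def IsStrongly2Irreducible {R M : Type*} [CommRing R] [AddCommGroup M] [Module R M]
    (N : Submodule R M) : Prop :=
  N ≠ ⊤ ∧ ∀ H₁ H₂ H₃ : Submodule R M, H₁ ⊓ H₂ ⊓ H₃ ≤ N →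
    H₁ ⊓ H₂ ≤ N ∨ H₁ ⊓ H₃ ≤ N ∨ H₂ ⊓ H₃ ≤ N

def IsPrimeSubmodule {R M : Type*} [CommRing R] [AddCommGroup M] [Module R M]
    (P : Submodule R M) : Prop :=
  P ≠ ⊤ ∧ ∀ (r : R) (m : M), r • m ∈ P → m ∈ P ∨ r ∈ P.colon ⊤

theorem stmt_14 {R M : Type*} [CommRing R] [AddCommGroup M] [Module R M]
    (S : Submonoid R) (N : Submodule R M) (hfg : N.FG)
    (hprime : IsPrimeSubmodule N) (hs2 : IsStrongly2Irreducible N)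
    (hdisj : (S : Set R) ∩ ((N.colon ⊤ : Ideal R) : Set R) = ∅)
    (hproper : N.localized S ≠ ⊤) :
    IsStrongly2Irreducible (N.localized S) := by
  set f := LocalizedModule.mkLinearMap S M with hf
  -- comap construction
  set K : Submodule (Localization S) (LocalizedModule S M) → Submodule R M :=
    fun H => (H.restrictScalars R).comap f with hK
  refine ⟨hproper, fun H₁ H₂ H₃ hle => ?_⟩
  -- step 1: K H₁ ⊓ K H₂ ⊓ K H₃ ≤ N
  have hstep1 : K H₁ ⊓ K H₂ ⊓ K H₃ ≤ N := by
    intro x hx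
    obtain ⟨⟨hx1, hx2⟩, hx3⟩ := hx
    have hfx : f x ∈ N.localized S := hle ⟨⟨hx1, hx2⟩, hx3⟩
    obtain ⟨n, hn, s, hns⟩ := hfx
    have hx1' : IsLocalizedModule.mk' f n s = IsLocalizedModule.mk' f x (1 : S) := by
      rw [hns, IsLocalizedModule.mk'_one S f]
    rw [IsLocalizedModule.mk'_eq_mk'_iff] at hx1'
    obtain ⟨u, hu⟩ := hx1'
    have hmem : ((u : R) * (s : R)) • x ∈ N := by
      simp only [Submonoid.smul_def, one_smul, OneMemClass.coe_one] at hu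
      rw [mul_smul, hu]
      exact N.smul_mem _ hn
    rcases hprime.2 _ x hmem with h | h
    · exact h
    · exfalso
      have : ((u : R) * (s : R)) ∈ (S : Set R) ∩ ((N.colon ⊤ : Ideal R) : Set R) :=
        ⟨S.mul_mem u.2 s.2, h⟩
      rw [hdisj] at this
      exact this
  -- step 2: if K Hᵢ ⊓ K Hⱼ ≤ N then Hᵢ ⊓ Hⱼ ≤ N.localized S
  have hstep2 : ∀ Ha Hb : Submodule (Localization S) (LocalizedModule S M),
      K Ha ⊓ K Hb ≤ N → Ha ⊓ Hb ≤ N.localized S := by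
    intro Ha Hb h x hx
    obtain ⟨⟨m, s⟩, rfl⟩ := IsLocalizedModule.mk'_surjective S f x
    have hfm : f m = s • IsLocalizedModule.mk' f m s :=
      (IsLocalizedModule.mk'_cancel' f m s).symm
    have hma : m ∈ K Ha := by
      show f m ∈ Ha.restrictScalars R
      rw [hfm]
      exact (Ha.restrictScalars R).smul_mem _ hx.1
    have hmb : m ∈ K Hb := by
      show f m ∈ Hb.restrictScalars R
      rw [hfm]
      exact (Hb.restrictScalars R).smul_mem _ hx.2
    exact ⟨m, h ⟨hma, hmb⟩, s, rfl⟩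
  rcases hs2.2 _ _ _ hstep1 with h | h | h
  · exact Or.inl (hstep2 _ _ h)
  · exact Or.inr (Or.inl (hstep2 _ _ h))
  · exact Or.inr (Or.inr (hstep2 _ _ h))
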